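/- Let 0 < p < 1 be real and k, d ≥ 1 be integers. Write b_K(ℓ) = C(K,ℓ)·p^ℓ·(1−p)^{K−ℓ} for the probability mass function of the binomial distribution B(K,p) (with b_K(ℓ) = 0 for ℓ < 0 or ℓ > K). Then the total variation distance equals the Kolmogorov distance: (1/2)·∑_{ℓ=0}^{k+d} |b_{k+d}(ℓ) − b_k(ℓ)| = max_{0 ≤ ℓ ≤ k+d+1} | ∑_{i ≥ ℓ} b_{k+d}(i) − ∑_{i ≥ ℓ} b_k(i) |. -/

import Mathlib

/-- The probability mass function of the binomial distribution `B(K, p)`: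
`b_K(ℓ) = C(K,ℓ) p^ℓ (1-p)^{K-ℓ}` (it vanishes for `ℓ > K` since `C(K,ℓ) = 0`). -/
noncomputable def binomPMF (p : ℝ) (K ℓ : ℕ) : ℝ :=
  (Nat.choose K ℓ : ℝ) * p ^ ℓ * (1 - p) ^ (K - ℓ)

lemma binomPMF_nonneg {p : ℝ} (hp0 : 0 ≤ p) (hp1 : p ≤ 1) (K ℓ : ℕ) :
    0 ≤ binomPMF p K ℓ := by
  unfold binomPMF
  have h1 : (0:ℝ) ≤ 1 - p := by linarith
  positivity

lemma sum_binomPMF (p : ℝ) (K : ℕ) :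
    ∑ ℓ ∈ Finset.range (K + 1), binomPMF p K ℓ = 1 := by
  have h := add_pow p (1 - p) K
  simp only [add_sub_cancel, one_pow] at h
  rw [h]
  apply Finset.sum_congr rfl
  intro ℓ _
  simp [binomPMF]; ring

theorem stmt6 (p : ℝ) (hp0 : 0 < p) (hp1 : p < 1) (k d : ℕ) (hk : 1 ≤ k) (hd : 1 ≤ d) :
    (1/2) * ∑ ℓ ∈ Finset.range (k + d + 1), |binomPMF p (k + d) ℓ - binomPMF p k ℓ|
      = (Finset.range (k + d + 2)).sup' (Finset.nonempty_range_iff.mpr (by omega))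
          (fun ℓ => |(∑ i ∈ Finset.Icc ℓ (k + d), binomPMF p (k + d) i)
            - ∑ i ∈ Finset.Icc ℓ (k + d), binomPMF p k i|) := by
  classical
  have hq : (0:ℝ) < 1 - p := by linarith
  set f : ℕ → ℝ := fun ℓ => binomPMF p (k + d) ℓ - binomPMF p k ℓ with hf
  -- the likelihood-ratio predicate
  set Q : ℕ → Prop := fun ℓ => (Nat.choose k ℓ : ℝ) ≤ (Nat.choose (k + d) ℓ : ℝ) * (1 - p) ^ d with hQ
  have hQmono : ∀ ℓ, Q ℓ → Q (ℓ + 1) := by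
    intro ℓ h
    have h1 : (Nat.choose k (ℓ+1) : ℝ) * (ℓ + 1) = (Nat.choose k ℓ : ℝ) * (k - ℓ : ℕ) := by
      exact_mod_cast congrArg (Nat.cast : ℕ → ℝ) (Nat.choose_succ_right_eq k ℓ)
    have h2 : (Nat.choose (k+d) (ℓ+1) : ℝ) * (ℓ + 1) = (Nat.choose (k+d) ℓ : ℝ) * ((k+d) - ℓ : ℕ) := by
      exact_mod_cast congrArg (Nat.cast : ℕ → ℝ) (Nat.choose_succ_right_eq (k+d) ℓ)
    have hle : ((k - ℓ : ℕ) : ℝ) ≤ ((k + d - ℓ : ℕ) : ℝ) := by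
      exact_mod_cast Nat.sub_le_sub_right (Nat.le_add_right k d) ℓ
    have hpos : (0:ℝ) < (ℓ:ℝ) + 1 := by positivity
    have hpow : (0:ℝ) ≤ (1-p)^d := by positivity
    have key : (Nat.choose k (ℓ+1) : ℝ) * (ℓ + 1) ≤
        (Nat.choose (k+d) (ℓ+1) : ℝ) * (1-p)^d * (ℓ + 1) := by
      rw [h1]
      have : (Nat.choose (k+d) (ℓ+1) : ℝ) * (1-p)^d * (ℓ + 1)
          = (Nat.choose (k+d) ℓ : ℝ) * ((k+d) - ℓ : ℕ) * (1-p)^d := by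
        rw [mul_right_comm, h2]
      rw [this]
      calc (Nat.choose k ℓ : ℝ) * (k - ℓ : ℕ)
          ≤ ((Nat.choose (k+d) ℓ : ℝ) * (1-p)^d) * (k - ℓ : ℕ) := by
            apply mul_le_mul_of_nonneg_right h (by positivity)
        _ ≤ (Nat.choose (k+d) ℓ : ℝ) * ((k+d) - ℓ : ℕ) * (1-p)^d := by
            rw [mul_right_comm]
            apply mul_le_mul_of_nonneg_right _ hpow
            exact mul_le_mul_of_nonneg_left hle (by positivity)
    exact le_of_mul_le_mul_right key hpos
  have hQk1 : Q (k + 1) := by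
    simp only [hQ, Nat.choose_eq_zero_of_lt (Nat.lt_succ_self k), Nat.cast_zero]
    positivity
  have hex : ∃ ℓ, Q ℓ := ⟨k + 1, hQk1⟩
  set t := Nat.find hex with ht
  have htk : t ≤ k + 1 := Nat.find_le hQk1
  have hQge : ∀ ℓ, t ≤ ℓ → Q ℓ := by
    intro ℓ hℓ
    induction ℓ, hℓ using Nat.le_induction with
    | base => exact Nat.find_spec hex
    | succ n hn ih => exact hQmono n ih
  have hQlt : ∀ ℓ, ℓ < t → ¬ Q ℓ := fun ℓ hℓ => Nat.find_min hex hℓ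
  -- sign of f
  have hf_nonneg : ∀ ℓ, t ≤ ℓ → 0 ≤ f ℓ := by
    intro ℓ hℓ
    have hQℓ := hQge ℓ hℓ
    by_cases hlk : ℓ ≤ k
    · have hsub : k + d - ℓ = (k - ℓ) + d := by omega
      simp only [hf, binomPMF, hsub, pow_add]
      have : (Nat.choose (k+d) ℓ : ℝ) * p ^ ℓ * ((1-p)^(k-ℓ) * (1-p)^d)
          - (Nat.choose k ℓ : ℝ) * p ^ ℓ * (1-p)^(k-ℓ)
          = p ^ ℓ * (1-p)^(k-ℓ) * ((Nat.choose (k+d) ℓ : ℝ) * (1-p)^d - (Nat.choose k ℓ : ℝ)) := by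
        ring
      rw [this]
      apply mul_nonneg (by positivity)
      linarith [hQℓ]
    · have : Nat.choose k ℓ = 0 := Nat.choose_eq_zero_of_lt (by omega)
      simp only [hf, binomPMF, this, Nat.cast_zero, zero_mul, sub_zero]
      have : (0:ℝ) ≤ 1 - p := le_of_lt hq
      positivity
  have hf_nonpos : ∀ ℓ, ℓ < t → f ℓ ≤ 0 := by
    intro ℓ hℓ
    have hnQ := hQlt ℓ hℓ
    have hlk : ℓ ≤ k := by omega
    have hsub : k + d - ℓ = (k - ℓ) + d := by omega
    simp only [hf, binomPMF, hsub, pow_add]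
    have : (Nat.choose (k+d) ℓ : ℝ) * p ^ ℓ * ((1-p)^(k-ℓ) * (1-p)^d)
        - (Nat.choose k ℓ : ℝ) * p ^ ℓ * (1-p)^(k-ℓ)
        = p ^ ℓ * (1-p)^(k-ℓ) * ((Nat.choose (k+d) ℓ : ℝ) * (1-p)^d - (Nat.choose k ℓ : ℝ)) := by
      ring
    rw [this]
    apply mul_nonpos_of_nonneg_of_nonpos (by positivity)
    simp only [hQ, not_le] at hnQ
    linarith
  -- total sum is zero
  have htotal : ∑ ℓ ∈ Finset.range (k + d + 1), f ℓ = 0 := by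
    simp only [hf, Finset.sum_sub_distrib]
    rw [sum_binomPMF]
    have : ∑ ℓ ∈ Finset.range (k + d + 1), binomPMF p k ℓ
        = ∑ ℓ ∈ Finset.range (k + 1), binomPMF p k ℓ := by
      symm
      apply Finset.sum_subset
      · intro x hx; simp only [Finset.mem_range] at *; omega
      · intro x _ hx
        simp only [Finset.mem_range, not_lt] at hx
        simp [binomPMF, Nat.choose_eq_zero_of_lt (by omega : k < x)]
    rw [this, sum_binomPMF]; ring
  -- tails
  have htail : ∀ ℓ, ℓ ≤ k + d + 1 →
      ∑ i ∈ Finset.Icc ℓ (k + d), f i = - ∑ i ∈ Finset.range ℓ, f i := by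
    intro ℓ hℓ
    have h1 : Finset.Icc ℓ (k + d) = Finset.Ico ℓ (k + d + 1) := by
      rw [Nat.Icc_eq_range', Nat.Ico_eq_range']
    have h2 := Finset.sum_Ico_consecutive f (Nat.zero_le ℓ) hℓ
    rw [← Finset.range_eq_Ico, ← Finset.range_eq_Ico] at h2
    rw [h1]
    linarith [h2, htotal]
  have htk' : t ≤ k + d + 1 := by omega
  -- LHS = tail t
  have hLHS : ∑ ℓ ∈ Finset.range (k + d + 1), |f ℓ| = 2 * ∑ i ∈ Finset.Icc t (k + d), f i := by
    have hsplit : ∑ ℓ ∈ Finset.range (k + d + 1), |f ℓ|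
        = ∑ ℓ ∈ Finset.Ico 0 t, |f ℓ| + ∑ ℓ ∈ Finset.Ico t (k + d + 1), |f ℓ| := by
      rw [Finset.range_eq_Ico]
      exact (Finset.sum_Ico_consecutive _ (Nat.zero_le t) htk').symm
    have h1 : ∑ ℓ ∈ Finset.Ico 0 t, |f ℓ| = - ∑ ℓ ∈ Finset.Ico 0 t, f ℓ := by
      rw [← Finset.sum_neg_distrib]
      exact Finset.sum_congr rfl fun x hx => abs_of_nonpos (hf_nonpos x (Finset.mem_Ico.mp hx).2)
    have h2 : ∑ ℓ ∈ Finset.Ico t (k + d + 1), |f ℓ| = ∑ ℓ ∈ Finset.Ico t (k + d + 1), f ℓ :=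
      Finset.sum_congr rfl fun x hx => abs_of_nonneg (hf_nonneg x (Finset.mem_Ico.mp hx).1)
    have h3 := htail t htk'
    have hIcc : Finset.Icc t (k + d) = Finset.Ico t (k + d + 1) := by
      rw [Nat.Icc_eq_range', Nat.Ico_eq_range']
    rw [hIcc] at h3
    rw [← Finset.range_eq_Ico] at h1
    rw [← Finset.range_eq_Ico] at hsplit
    rw [hsplit, h1, h2, hIcc]
    linarith
  -- rewrite the goal in terms of f
  have hgoal : ∀ ℓ, (∑ i ∈ Finset.Icc ℓ (k + d), binomPMF p (k + d) i)
      - ∑ i ∈ Finset.Icc ℓ (k + d), binomPMF p k i = ∑ i ∈ Finset.Icc ℓ (k + d), f i := by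
    intro ℓ; rw [Finset.sum_sub_distrib]
  have hfeq : ∀ ℓ, binomPMF p (k + d) ℓ - binomPMF p k ℓ = f ℓ := fun _ => rfl
  simp only [hgoal, hfeq]
  rw [hLHS]
  have hT0 : 0 ≤ ∑ i ∈ Finset.Icc t (k + d), f i :=
    Finset.sum_nonneg fun i hi => hf_nonneg i (Finset.mem_Icc.mp hi).1
  apply le_antisymm
  · have hmem : t ∈ Finset.range (k + d + 2) := Finset.mem_range.mpr (by omega)
    have hle := Finset.le_sup' (fun ℓ => |∑ i ∈ Finset.Icc ℓ (k + d), f i|) hmem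
    simp only [abs_of_nonneg hT0] at hle
    linarith
  · apply Finset.sup'_le
    intro ℓ hℓ
    simp only [Finset.mem_range] at hℓ
    have hℓ' : ℓ ≤ k + d + 1 := by omega
    have hnn : 0 ≤ ∑ i ∈ Finset.Icc ℓ (k + d), f i := by
      by_cases hc : t ≤ ℓ
      · exact Finset.sum_nonneg fun i hi => hf_nonneg i (le_trans hc (Finset.mem_Icc.mp hi).1)
      · rw [htail ℓ hℓ', neg_nonneg]
        exact Finset.sum_nonpos fun i hi => hf_nonpos i (by
          have := Finset.mem_range.mp hi; omega)
    have hle : ∑ i ∈ Finset.Icc ℓ (k + d), f i ≤ ∑ i ∈ Finset.Icc t (k + d), f i := by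
      by_cases hc : t ≤ ℓ
      · apply Finset.sum_le_sum_of_subset_of_nonneg (Finset.Icc_subset_Icc_left hc)
        intro i hi _; exact hf_nonneg i (Finset.mem_Icc.mp hi).1
      · push_neg at hc
        have hA := htail ℓ hℓ'
        have hB := htail t htk'
        have hsplit2 := Finset.sum_Ico_consecutive f (Nat.zero_le ℓ) (le_of_lt hc)
        rw [← Finset.range_eq_Ico, ← Finset.range_eq_Ico] at hsplit2
        have hmid : ∑ i ∈ Finset.Ico ℓ t, f i ≤ 0 :=
          Finset.sum_nonpos fun i hi => hf_nonpos i (Finset.mem_Ico.mp hi).2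
        linarith
    rw [abs_of_nonneg hnn]
    linarith
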